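/- Let l > 0, let τ : [0,l] → ℝ be continuously differentiable with τ(l) = 0, let Q₁ : [0,l] → ℝ be continuous, and let Q : [0,l] × [0,l] → ℝ be continuous such that for every fixed x ∈ [0,l] the function z ↦ Q(x,z) is differentiable with ∂Q/∂z(x,z) = −Q₁(x)·Q₁(z). Then ∫_0^l τ(x) ( ∫_x^l τ'(z) Q(x,z) dz ) dx = −∫_0^l τ(x)² Q(x,x) dx + (1/2) ( ∫_0^l τ(z) Q₁(z) dz )². -/

import Mathlib

open Real Set intervalIntegral

/-- FTC for a derivative within `Icc a b`. -/
lemma ftc_within {a b : ℝ} (hab : a ≤ b) {f f' : ℝ → ℝ}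
    (hf : ∀ x ∈ Icc a b, HasDerivWithinAt f (f' x) (Icc a b) x)
    (hint : IntervalIntegrable f' MeasureTheory.volume a b) :
    ∫ y in a..b, f' y = f b - f a := by
  apply integral_eq_sub_of_hasDeriv_right_of_le hab
    (fun x hx => (hf x hx).continuousWithinAt)
    (fun x hx => (hf x (Ioo_subset_Icc_self hx)).mono_of_mem_nhdsWithin
      (Icc_mem_nhdsGT_of_mem ⟨hx.1.le, hx.2⟩)) hint

/-- Integration-by-parts identity for a multiplicative kernel
(`∂Q/∂z(x,z) = -Q₁(x)Q₁(z)`): for `τ ∈ C¹[0,l]` with `τ(l) = 0`,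
`∫_0^l τ(x)(∫_x^l τ'(z)Q(x,z)dz)dx = -∫_0^l τ(x)²Q(x,x)dx + (1/2)(∫_0^l τQ₁)²`. -/
theorem energy_integral_kernel_Q
    (l : ℝ) (hl : 0 < l)
    (τ τ' : ℝ → ℝ)
    (hτ' : ∀ x ∈ Icc (0 : ℝ) l, HasDerivWithinAt τ (τ' x) (Icc 0 l) x)
    (hτ'cont : ContinuousOn τ' (Icc 0 l))
    (hτl : τ l = 0)
    (Q₁ : ℝ → ℝ) (hQ₁ : ContinuousOn Q₁ (Icc 0 l))
    (Q : ℝ → ℝ → ℝ)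
    (hQcont : ContinuousOn (fun p : ℝ × ℝ => Q p.1 p.2) (Icc 0 l ×ˢ Icc 0 l))
    (hQz : ∀ x ∈ Icc (0 : ℝ) l, ∀ z ∈ Icc (0 : ℝ) l,
      HasDerivWithinAt (fun z' => Q x z') (-(Q₁ x * Q₁ z)) (Icc 0 l) z) :
    ∫ x in (0 : ℝ)..l, τ x * ∫ z in x..l, τ' z * Q x z =
      -(∫ x in (0 : ℝ)..l, (τ x) ^ 2 * Q x x) +
        (1 / 2) * (∫ z in (0 : ℝ)..l, τ z * Q₁ z) ^ 2 := by
  have hτcont : ContinuousOn τ (Icc 0 l) := fun x hx => (hτ' x hx).continuousWithinAt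
  -- clamped extension of τ * Q₁
  set c : ℝ → ℝ := fun x => min (max x 0) l with hc
  have hcmem : ∀ x, c x ∈ Icc (0 : ℝ) l := fun x =>
    ⟨le_min (le_max_right _ _) hl.le, min_le_right _ _⟩
  have hccont : Continuous c := (continuous_id.max continuous_const).min continuous_const
  have hceq : ∀ x ∈ Icc (0 : ℝ) l, c x = x := by
    intro x hx
    simp [hc, max_eq_left hx.1, min_eq_left hx.2]
  set g : ℝ → ℝ := fun x => τ (c x) * Q₁ (c x) with hg
  have hgcont : Continuous g := (hτcont.mul hQ₁).comp_continuous hccont hcmem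
  have hgeq : ∀ x ∈ Icc (0 : ℝ) l, g x = τ x * Q₁ x := by
    intro x hx; simp only [hg, hceq x hx]
  set G : ℝ → ℝ := fun x => ∫ z in x..l, g z with hG
  have hGderiv : ∀ x : ℝ, HasDerivAt G (-(g x)) x := by
    intro x
    have h1 : HasDerivAt (fun u => ∫ z in (l : ℝ)..u, g z) (g x) x :=
      intervalIntegral.integral_hasDerivAt_right (hgcont.intervalIntegrable _ _)
        hgcont.stronglyMeasurable.stronglyMeasurableAtFilter hgcont.continuousAt
    have h2 : HasDerivAt (fun u => -∫ z in (l : ℝ)..u, g z) (-(g x)) x := h1.neg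
    exact h2.congr_of_eventuallyEq (Filter.Eventually.of_forall fun u =>
      intervalIntegral.integral_symm _ _)
  have hGcont : Continuous G :=
    continuous_iff_continuousAt.2 fun x => (hGderiv x).continuousAt
  -- G agrees with the real tail integral on [0,l]
  have hGeq : ∀ x ∈ Icc (0 : ℝ) l, G x = ∫ z in x..l, τ z * Q₁ z := by
    intro x hx
    refine intervalIntegral.integral_congr fun z hz => ?_
    rw [uIcc_of_le hx.2] at hz
    exact hgeq z ⟨le_trans hx.1 hz.1, hz.2⟩
  -- Step A: inner integration by parts
  have hQxcont : ∀ x ∈ Icc (0 : ℝ) l, ContinuousOn (fun z => Q x z) (Icc 0 l) := by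
    intro x hx
    exact hQcont.comp (continuous_const.prodMk continuous_id).continuousOn
      (fun z hz => ⟨hx, hz⟩)
  have stepA : ∀ x ∈ Icc (0 : ℝ) l,
      ∫ z in x..l, τ' z * Q x z = -(τ x * Q x x) + Q₁ x * G x := by
    intro x hx
    have hsub : Icc x l ⊆ Icc (0 : ℝ) l := Icc_subset_Icc hx.1 le_rfl
    have hmem : ∀ z ∈ Icc x l, z ∈ Icc (0 : ℝ) l := fun z hz => hsub hz
    -- FTC for u z = τ z * Q x z on [x,l]
    have hderiv : ∀ z ∈ Icc x l,
        HasDerivWithinAt (fun z => τ z * Q x z)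
          (τ' z * Q x z + τ z * (-(Q₁ x * Q₁ z))) (Icc x l) z := by
      intro z hz
      exact (((hτ' z (hmem z hz)).mul (hQz x hx z (hmem z hz))).mono hsub)
    have hi1 : IntervalIntegrable (fun z => τ' z * Q x z) MeasureTheory.volume x l := by
      apply ContinuousOn.intervalIntegrable
      rw [uIcc_of_le hx.2]
      exact (hτ'cont.mono hsub).mul ((hQxcont x hx).mono hsub)
    have hi2 : IntervalIntegrable (fun z => τ z * (-(Q₁ x * Q₁ z)))
        MeasureTheory.volume x l := by
      apply ContinuousOn.intervalIntegrable
      rw [uIcc_of_le hx.2]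
      exact (hτcont.mono hsub).mul (((hQ₁.mono hsub).const_smul (Q₁ x)).neg)
    have hftc : ∫ z in x..l, (τ' z * Q x z + τ z * (-(Q₁ x * Q₁ z))) =
        τ l * Q x l - τ x * Q x x := ftc_within hx.2 hderiv (hi1.add hi2)
    rw [intervalIntegral.integral_add hi1 hi2, hτl, zero_mul, zero_sub] at hftc
    have h2 : ∫ z in x..l, τ z * (-(Q₁ x * Q₁ z)) = -(Q₁ x * G x) := by
      have : ∀ z, τ z * (-(Q₁ x * Q₁ z)) = -(Q₁ x) * (τ z * Q₁ z) := by intro z; ring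
      simp_rw [this]
      rw [intervalIntegral.integral_const_mul, hGeq x hx]
      ring
    rw [h2] at hftc
    linarith
  -- rewrite outer integrand
  have houter : ∫ x in (0 : ℝ)..l, τ x * ∫ z in x..l, τ' z * Q x z =
      ∫ x in (0 : ℝ)..l, (-((τ x) ^ 2 * Q x x) + g x * G x) := by
    refine intervalIntegral.integral_congr fun x hx => ?_
    rw [uIcc_of_le hl.le] at hx
    rw [stepA x hx, hgeq x hx]
    ring
  rw [houter]
  -- split the integral
  have hQdiag : ContinuousOn (fun x => Q x x) (Icc 0 l) :=
    hQcont.comp (continuous_id.prodMk continuous_id).continuousOn (fun x hx => ⟨hx, hx⟩)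
  have hi1 : IntervalIntegrable (fun x => -((τ x) ^ 2 * Q x x)) MeasureTheory.volume 0 l := by
    apply ContinuousOn.intervalIntegrable
    rw [uIcc_of_le hl.le]
    exact ((hτcont.pow 2).mul hQdiag).neg
  have hi2 : IntervalIntegrable (fun x => g x * G x) MeasureTheory.volume 0 l :=
    (hgcont.mul hGcont).intervalIntegrable _ _
  rw [intervalIntegral.integral_add hi1 hi2, intervalIntegral.integral_neg]
  -- final FTC: ∫ g G = (1/2) G(0)^2
  have hfin : ∫ x in (0 : ℝ)..l, g x * G x = (1 / 2) * (G 0) ^ 2 := by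
    have hd : ∀ x ∈ Icc (0 : ℝ) l,
        HasDerivWithinAt (fun x => -(1 / 2) * (G x) ^ 2) (g x * G x) (Icc 0 l) x := by
      intro x hx
      have := (((hGderiv x).pow 2).const_mul (-(1/2) : ℝ)).hasDerivWithinAt
        (s := Icc (0:ℝ) l)
      exact this.congr_deriv (by ring)
    have := ftc_within hl.le hd hi2
    have hGl : G l = 0 := by simp [hG]
    rw [hGl] at this
    rw [this]
    ring
  rw [hfin]
  have hG0 : G 0 = ∫ z in (0 : ℝ)..l, τ z * Q₁ z := hGeq 0 ⟨le_rfl, hl.le⟩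
  rw [hG0]
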